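/- Let γ : [0,1] → ℝ be continuous, Γ(u) := ∫₀^u γ(v) dv, g := ∫₀¹ γ(v) dv, and assume condition (E1): Γ(u) − g·u > 0 for all u ∈ (0,1). If γ(0) > g > γ(1), then condition (E2) holds: ∫₀^{1/2} u/(Γ(u) − g·u) du + ∫_{1/2}^1 (1−u)/(Γ(u) − g·u) du < +∞. -/

import Mathlib

open MeasureTheory Set Filter Topology

/-- `Γ(u) = ∫₀^u γ(v) dv`. -/
noncomputable def Gam (γ : ℝ → ℝ) (u : ℝ) : ℝ := ∫ v in (0:ℝ)..u, γ v

/-- market mean growth rate `g = ∫₀¹ γ(v) dv`. -/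
noncomputable def mg (γ : ℝ → ℝ) : ℝ := ∫ v in (0:ℝ)..1, γ v

/-- `Ψ(u) = ∫_{1/2}^u σ²(v) / (2 (Γ(v) - g v)) dv`. -/
noncomputable def Psi (γ σ2 : ℝ → ℝ) (u : ℝ) : ℝ :=
  ∫ v in (1/2:ℝ)..u, σ2 v / (2 * (Gam γ v - mg γ * v))

/-- critical diversity index `p_c = 2 (g - γ(1)) / σ²(1)`. -/
noncomputable def pcrit (γ σ2 : ℝ → ℝ) : ℝ := 2 * (mg γ - γ 1) / σ2 1

/-- critical index `q_c = 2 (γ(0) - g) / σ²(0)`. -/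
noncomputable def qcrit (γ σ2 : ℝ → ℝ) : ℝ := 2 * (γ 0 - mg γ) / σ2 0

variable {γ : ℝ → ℝ}

lemma intInt (hγc : ContinuousOn γ (Icc 0 1)) {a b : ℝ} (ha : a ∈ Icc (0:ℝ) 1)
    (hb : b ∈ Icc (0:ℝ) 1) : IntervalIntegrable γ volume a b :=
  (hγc.mono (uIcc_subset_Icc ha hb)).intervalIntegrable

lemma contD (hγc : ContinuousOn γ (Icc 0 1)) :
    ContinuousOn (fun u => Gam γ u - mg γ * u) (Icc 0 1) := by
  have h : IntegrableOn γ (uIcc 0 1) volume := by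
    rw [uIcc_of_le (by norm_num : (0:ℝ) ≤ 1)]
    exact hγc.integrableOn_Icc
  have := intervalIntegral.continuousOn_primitive_interval (μ := volume) h
  rw [uIcc_of_le (by norm_num : (0:ℝ) ≤ 1)] at this
  exact this.sub (continuousOn_const.mul continuousOn_id)

/-- generic: bounded + continuous on Ioo → integrable -/
lemma integrable_of_bound {f : ℝ → ℝ} {a b C : ℝ}
    (hm : ContinuousOn f (Ioo a b)) (hb : ∀ u ∈ Ioo a b, ‖f u‖ ≤ C) :
    IntegrableOn f (Ioo a b) := by
  refine Integrable.mono' (g := fun _ => C) ?_ (hm.aestronglyMeasurable measurableSet_Ioo) ?_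
  · exact integrableOn_const measure_Ioo_lt_top.ne
  · exact (ae_restrict_iff' measurableSet_Ioo).2 (ae_of_all _ hb)

/-- lower bound near 0 -/
lemma lb0 (hγc : ContinuousOn γ (Icc 0 1)) (h0 : γ 0 > mg γ) :
    ∃ δ > 0, δ ≤ 1/2 ∧ ∀ u ∈ Ioc (0:ℝ) δ,
      (γ 0 - mg γ)/2 * u ≤ Gam γ u - mg γ * u := by
  set c : ℝ := (γ 0 + mg γ)/2 with hc
  have hcγ : c < γ 0 := by rw [hc]; linarith
  have hev : ∀ᶠ v in 𝓝[Icc (0:ℝ) 1] 0, c < γ v := by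
    have := (hγc 0 (by norm_num : (0:ℝ) ∈ Icc 0 1)).eventually (eventually_gt_nhds hcγ)
    exact this
  rw [nhdsWithin_Icc_eq_nhdsGE (by norm_num : (0:ℝ) < 1)] at hev
  obtain ⟨d, hd, hsub⟩ := mem_nhdsGE_iff_exists_Ico_subset.1 hev
  refine ⟨min (d/2) (1/2), lt_min (by simpa using half_pos (mem_Ioi.1 hd)) (by norm_num),
    min_le_right _ _, ?_⟩
  intro u hu
  have hu1 : u ≤ 1/2 := hu.2.trans (min_le_right _ _)
  have hd' : 0 < d := mem_Ioi.1 hd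
  have hud : u < d := lt_of_le_of_lt (hu.2.trans (min_le_left _ _)) (by linarith)
  have hγbound : ∀ v ∈ Icc (0:ℝ) u, c ≤ γ v := fun v hv =>
    le_of_lt (hsub ⟨hv.1, lt_of_le_of_lt hv.2 hud⟩)
  have hum : u ∈ Icc (0:ℝ) 1 := ⟨le_of_lt hu.1, by linarith⟩
  have hmono : c * u ≤ Gam γ u := by
    have h := intervalIntegral.integral_mono_on (μ := volume) (le_of_lt hu.1)
      (intervalIntegrable_const (c := c))
      (intInt hγc (by norm_num) hum) hγbound
    have hic : ∫ _ in (0:ℝ)..u, c = c * u := by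
      rw [intervalIntegral.integral_const]; ring_nf
    rw [hic] at h; exact h
  have : (γ 0 - mg γ)/2 * u = (c - mg γ) * u := by ring
  rw [this]
  nlinarith [hmono]

/-- lower bound near 1 -/
lemma lb1 (hγc : ContinuousOn γ (Icc 0 1)) (h1 : mg γ > γ 1) :
    ∃ δ > 0, δ ≤ 1/2 ∧ ∀ u ∈ Ico (1 - δ) (1:ℝ),
      (mg γ - γ 1)/2 * (1 - u) ≤ Gam γ u - mg γ * u := by
  set c : ℝ := (γ 1 + mg γ)/2 with hc
  have hcγ : γ 1 < c := by rw [hc]; linarith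
  have hev : ∀ᶠ v in 𝓝[Icc (0:ℝ) 1] 1, γ v < c := by
    exact (hγc 1 (by norm_num : (1:ℝ) ∈ Icc 0 1)).eventually (eventually_lt_nhds hcγ)
  rw [nhdsWithin_Icc_eq_nhdsLE (by norm_num : (0:ℝ) < 1)] at hev
  obtain ⟨d, hd, hsub⟩ := mem_nhdsLE_iff_exists_Ioc_subset.1 hev
  have hd1 : d < 1 := hd
  refine ⟨min ((1-d)/2) (1/2), lt_min (by linarith) (by norm_num),
    min_le_right _ _, ?_⟩
  intro u hu
  have hu1 : u < 1 := hu.2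
  have hud : d < u := by
    have := hu.1
    have h2 : 1 - min ((1-d)/2) (1/2) ≥ 1 - (1-d)/2 := by
      have := min_le_left ((1-d)/2) (1/2); linarith
    linarith
  have hγbound : ∀ v ∈ Icc u 1, γ v ≤ c := fun v hv =>
    le_of_lt (hsub ⟨lt_of_lt_of_le hud hv.1, hv.2⟩)
  have hu0 : 0 ≤ u := by
    have := min_le_right ((1-d)/2) (1/2); have := hu.1; linarith
  have hum : u ∈ Icc (0:ℝ) 1 := ⟨hu0, le_of_lt hu1⟩
  have hmono : ∫ v in u..1, γ v ≤ c * (1 - u) := by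
    have h := intervalIntegral.integral_mono_on (μ := volume) (le_of_lt hu1)
      (intInt hγc hum (by norm_num))
      (intervalIntegrable_const (c := c)) hγbound
    have hic : ∫ _ in u..(1:ℝ), c = c * (1 - u) := by
      rw [intervalIntegral.integral_const, smul_eq_mul]; ring
    rw [hic] at h; exact h
  have hadd : Gam γ u + ∫ v in u..1, γ v = mg γ :=
    intervalIntegral.integral_add_adjacent_intervals
      (intInt hγc (by norm_num) hum) (intInt hγc hum (by norm_num))
  nlinarith [hmono, hadd]

/-- under (E1), if γ(0) > g > γ(1) then (E2) holds, i.e. both integrals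
∫₀^{1/2} u/(Γ(u) - g u) du and ∫_{1/2}^1 (1-u)/(Γ(u) - g u) du are finite. -/
theorem stmt2 (γ : ℝ → ℝ) (hγc : ContinuousOn γ (Set.Icc 0 1))
    (hE1 : ∀ u ∈ Set.Ioo (0:ℝ) 1, 0 < Gam γ u - mg γ * u)
    (h0 : γ 0 > mg γ) (h1 : mg γ > γ 1) :
    IntegrableOn (fun u => u / (Gam γ u - mg γ * u)) (Set.Ioo 0 (1/2)) ∧
      IntegrableOn (fun u => (1 - u) / (Gam γ u - mg γ * u)) (Set.Ioo (1/2) 1) := by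
  have hD := contD hγc
  constructor
  · obtain ⟨δ, hδ0, hδh, hlb⟩ := lb0 hγc h0
    -- compact part bound
    have hKsub : Icc δ (1/2) ⊆ Ioo (0:ℝ) 1 := fun x hx => ⟨lt_of_lt_of_le hδ0 hx.1,
      lt_of_le_of_lt hx.2 (by norm_num)⟩
    have hKsub' : Icc δ (1/2) ⊆ Icc (0:ℝ) 1 := fun x hx =>
      ⟨le_of_lt (hKsub hx).1, le_of_lt (hKsub hx).2⟩
    have hfK : ContinuousOn (fun u => u / (Gam γ u - mg γ * u)) (Icc δ (1/2)) :=
      continuousOn_id.div (hD.mono hKsub') (fun x hx => ne_of_gt (hE1 x (hKsub hx)))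
    obtain ⟨C₁, hC₁⟩ := isCompact_Icc.exists_bound_of_continuousOn hfK
    set k : ℝ := (γ 0 - mg γ)/2 with hk
    have hkpos : 0 < k := by rw [hk]; linarith
    refine integrable_of_bound (C := max C₁ (1/k)) ?_ ?_
    · exact continuousOn_id.div
        (hD.mono (fun x hx => ⟨le_of_lt hx.1, le_of_lt (lt_of_lt_of_le hx.2 (by norm_num))⟩))
        (fun x hx => ne_of_gt (hE1 x ⟨hx.1, lt_of_lt_of_le hx.2 (by norm_num)⟩))
    · intro u hu
      have huI : u ∈ Ioo (0:ℝ) 1 := ⟨hu.1, hu.2.trans_le (by norm_num)⟩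
      have hDu : 0 < Gam γ u - mg γ * u := hE1 u huI
      by_cases hcase : u ≤ δ
      · have hlbu := hlb u ⟨hu.1, hcase⟩
        have hnorm : ‖u / (Gam γ u - mg γ * u)‖ = u / (Gam γ u - mg γ * u) := by
          rw [Real.norm_eq_abs, abs_of_nonneg (div_nonneg (le_of_lt hu.1) (le_of_lt hDu))]
        rw [hnorm]
        have h2 : u / (Gam γ u - mg γ * u) ≤ u / (k * u) :=
          div_le_div_of_nonneg_left (le_of_lt hu.1) (mul_pos hkpos hu.1) hlbu
        have h3 : u / (k * u) = 1/k := by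
          rw [mul_comm]
          rw [div_mul_eq_div_div, div_self (ne_of_gt hu.1)]
        exact le_trans h2 (h3 ▸ le_max_right _ _)
      · exact le_trans (hC₁ u ⟨le_of_not_ge hcase, le_of_lt hu.2⟩) (le_max_left _ _)
  · obtain ⟨δ, hδ0, hδh, hlb⟩ := lb1 hγc h1
    have hKsub : Icc (1/2) (1-δ) ⊆ Ioo (0:ℝ) 1 := fun x hx =>
      ⟨lt_of_lt_of_le (by norm_num) hx.1, lt_of_le_of_lt hx.2 (by linarith)⟩
    have hKsub' : Icc (1/2) (1-δ) ⊆ Icc (0:ℝ) 1 := fun x hx =>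
      ⟨le_of_lt (hKsub hx).1, le_of_lt (hKsub hx).2⟩
    have hfK : ContinuousOn (fun u => (1 - u) / (Gam γ u - mg γ * u)) (Icc (1/2) (1-δ)) :=
      (continuousOn_const.sub continuousOn_id).div (hD.mono hKsub')
        (fun x hx => ne_of_gt (hE1 x (hKsub hx)))
    obtain ⟨C₁, hC₁⟩ := isCompact_Icc.exists_bound_of_continuousOn hfK
    set k : ℝ := (mg γ - γ 1)/2 with hk
    have hkpos : 0 < k := by rw [hk]; linarith
    refine integrable_of_bound (C := max C₁ (1/k)) ?_ ?_
    · exact (continuousOn_const.sub continuousOn_id).div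
        (hD.mono (fun x hx => ⟨le_of_lt (lt_of_le_of_lt (by norm_num) hx.1), le_of_lt hx.2⟩))
        (fun x hx => ne_of_gt (hE1 x ⟨lt_of_le_of_lt (by norm_num) hx.1, hx.2⟩))
    · intro u hu
      have huI : u ∈ Ioo (0:ℝ) 1 := ⟨lt_trans (by norm_num : (0:ℝ) < 1/2) hu.1, hu.2⟩
      have hDu : 0 < Gam γ u - mg γ * u := hE1 u huI
      have hu1 : 0 < 1 - u := by linarith [hu.2]
      by_cases hcase : 1 - δ ≤ u
      · have hlbu := hlb u ⟨hcase, hu.2⟩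
        have hnorm : ‖(1 - u) / (Gam γ u - mg γ * u)‖ = (1 - u) / (Gam γ u - mg γ * u) := by
          rw [Real.norm_eq_abs, abs_of_nonneg (div_nonneg (le_of_lt hu1) (le_of_lt hDu))]
        rw [hnorm]
        have h2 : (1 - u) / (Gam γ u - mg γ * u) ≤ (1 - u) / (k * (1 - u)) :=
          div_le_div_of_nonneg_left (le_of_lt hu1) (mul_pos hkpos hu1) hlbu
        have h3 : (1 - u) / (k * (1 - u)) = 1/k := by
          rw [mul_comm]
          rw [div_mul_eq_div_div, div_self (ne_of_gt hu1)]
        exact le_trans h2 (h3 ▸ le_max_right _ _)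
      · exact le_trans (hC₁ u ⟨le_of_lt hu.1, by linarith [lt_of_not_ge hcase]⟩)
          (le_max_left _ _)
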